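/- In a compact closed symmetric monoidal category where every object is self-dual via cups η_A and caps ε_A, the assignment f ↦ (ε_B ⊗ id_A) ∘ (id_B ⊗ f ⊗ id_A) ∘ (id_B ⊗ η_A) (suitably bracketed) on morphisms f : A → B defines an involutive contravariant identity-on-objects functor, i.e., a dagger. Hence any time-neutral theory is time-symmetric. -/

import Mathlib

open CategoryTheory MonoidalCategory

/-- The candidate dagger obtained by bending wires with cups and caps:
`f ↦ (ε_B ⊗ id_A) ∘ (id_B ⊗ f ⊗ id_A) ∘ (id_B ⊗ η_A)` (suitably bracketed). -/
def bendDag {C : Type*} [Category C] [MonoidalCategory C]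
    (η : ∀ X : C, 𝟙_ C ⟶ X ⊗ X) (ε : ∀ X : C, X ⊗ X ⟶ 𝟙_ C)
    {A B : C} (f : A ⟶ B) : B ⟶ A :=
  (ρ_ B).inv ≫ (B ◁ η A) ≫ (B ◁ (f ▷ A)) ≫ (α_ B B A).inv ≫ (ε B ▷ A) ≫ (λ_ A).hom

section Aux

variable {C : Type*} [Category C] [MonoidalCategory C]
    (η : ∀ X : C, 𝟙_ C ⟶ X ⊗ X) (ε : ∀ X : C, X ⊗ X ⟶ 𝟙_ C)
    (snake₁ : ∀ X : C,
      (λ_ X).inv ≫ (η X ▷ X) ≫ (α_ X X X).hom ≫ (X ◁ ε X) ≫ (ρ_ X).hom = 𝟙 X)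
    (snake₂ : ∀ X : C,
      (ρ_ X).inv ≫ (X ◁ η X) ≫ (α_ X X X).inv ≫ (ε X ▷ X) ≫ (λ_ X).hom = 𝟙 X)

/-- The self-duality exact pairing built from the cups and caps. -/
def bendPairing (X : C) : ExactPairing X X where
  coevaluation' := η X
  evaluation' := ε X
  coevaluation_evaluation' := by
    rw [← cancel_epi (ρ_ X).inv, ← cancel_mono (λ_ X).hom]
    simpa using snake₂ X
  evaluation_coevaluation' := by
    rw [← cancel_epi (λ_ X).inv, ← cancel_mono (ρ_ X).hom]
    simpa using snake₁ X

/-- Every object is its own right dual. -/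
def bendDual (X : C) : HasRightDual X :=
  @HasRightDual.mk C _ _ X X (bendPairing η ε snake₁ snake₂ X)

theorem bendDag_eq_mate {A B : C} (f : A ⟶ B) :
    bendDag η ε f =
      @rightAdjointMate C _ _ A B (bendDual η ε snake₁ snake₂ A)
        (bendDual η ε snake₁ snake₂ B) f :=
  rfl

end Aux

/-- In a compact closed symmetric monoidal category in which every object is self-dual
via cups `η` and caps `ε` (satisfying the snake equations and the symmetry condition
`σ_{A,A} ∘ η_A = η_A`), the wire-bending assignment `bendDag` defines an involutive
contravariant identity-on-objects functor, i.e. a dagger. Hence any time-neutral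
theory is time-symmetric. -/
theorem bendDag_is_dagger {C : Type*} [Category C] [MonoidalCategory C]
    [SymmetricCategory C]
    (η : ∀ X : C, 𝟙_ C ⟶ X ⊗ X) (ε : ∀ X : C, X ⊗ X ⟶ 𝟙_ C)
    (snake₁ : ∀ X : C,
      (λ_ X).inv ≫ (η X ▷ X) ≫ (α_ X X X).hom ≫ (X ◁ ε X) ≫ (ρ_ X).hom = 𝟙 X)
    (snake₂ : ∀ X : C,
      (ρ_ X).inv ≫ (X ◁ η X) ≫ (α_ X X X).inv ≫ (ε X ▷ X) ≫ (λ_ X).hom = 𝟙 X)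
    (hsym : ∀ X : C, η X ≫ (β_ X X).hom = η X) :
    (∀ A : C, bendDag η ε (𝟙 A) = 𝟙 A) ∧
      (∀ {A B D : C} (f : A ⟶ B) (g : B ⟶ D),
        bendDag η ε (f ≫ g) = bendDag η ε g ≫ bendDag η ε f) ∧
      (∀ {A B : C} (f : A ⟶ B), bendDag η ε (bendDag η ε f) = f) := by
  letI D : ∀ X : C, HasRightDual X := bendDual η ε snake₁ snake₂
  -- the cup of the pairing is `η` and the cap is `ε`
  have hη : ∀ X : C, @ExactPairing.coevaluation C _ _ X X (D X).exact = η X := fun X => rfl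
  have hε : ∀ X : C, @ExactPairing.evaluation C _ _ X X (D X).exact = ε X := fun X => rfl
  -- sliding a morphism around the cup
  have slide : ∀ {A B : C} (f : A ⟶ B),
      η B ≫ (bendDag η ε f ▷ B) = η A ≫ (A ◁ f) := by
    intro A B f
    calc η B ≫ (bendDag η ε f ▷ B)
        = η B ≫ (β_ B B).hom ≫ (bendDag η ε f ▷ B) := by
          rw [reassoc_of% (hsym B)]
      _ = (η B ≫ (B ◁ bendDag η ε f)) ≫ (β_ B A).hom := by
          rw [← BraidedCategory.braiding_naturality_right]; simp
      _ = (η A ≫ (f ▷ A)) ≫ (β_ B A).hom := by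
          rw [bendDag_eq_mate η ε snake₁ snake₂]
          exact congrArg (· ≫ (β_ B A).hom)
            (show η B ≫ (B ◁ @rightAdjointMate C _ _ A B (D A) (D B) f) = η A ≫ (f ▷ A) from
              @coevaluation_comp_rightAdjointMate C _ _ A B (D A) (D B) f)
      _ = η A ≫ (β_ A A).hom ≫ (A ◁ f) := by
          rw [Category.assoc, BraidedCategory.braiding_naturality_left]
      _ = η A ≫ (A ◁ f) := by rw [reassoc_of% (hsym A)]
  refine ⟨?_, ?_, ?_⟩
  · intro A
    rw [bendDag_eq_mate η ε snake₁ snake₂,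
      show @rightAdjointMate C _ _ A A (D A) (D A) (𝟙 A) = 𝟙 A from
        @rightAdjointMate_id C _ _ A (D A)]
  · intro A B X f g
    rw [bendDag_eq_mate η ε snake₁ snake₂, bendDag_eq_mate η ε snake₁ snake₂,
      bendDag_eq_mate η ε snake₁ snake₂]
    exact @comp_rightAdjointMate C _ _ A B X (D A) (D B) (D X) f g
  · intro A B f
    show (ρ_ A).inv ≫ (A ◁ η B) ≫ (A ◁ (bendDag η ε f ▷ B)) ≫ (α_ A A B).inv ≫
        (ε A ▷ B) ≫ (λ_ B).hom = f
    rw [← MonoidalCategory.whiskerLeft_comp_assoc, slide f,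
      MonoidalCategory.whiskerLeft_comp_assoc]
    calc (ρ_ A).inv ≫ (A ◁ η A) ≫ (A ◁ (A ◁ f)) ≫ (α_ A A B).inv ≫
            (ε A ▷ B) ≫ (λ_ B).hom
        = (ρ_ A).inv ≫ (A ◁ η A) ≫ (α_ A A A).inv ≫ ((A ⊗ A) ◁ f) ≫
            (ε A ▷ B) ≫ (λ_ B).hom := by
          rw [← associator_inv_naturality_right_assoc]
      _ = (ρ_ A).inv ≫ (A ◁ η A) ≫ (α_ A A A).inv ≫ (ε A ▷ A) ≫
            ((𝟙_ C) ◁ f) ≫ (λ_ B).hom := by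
          rw [whisker_exchange_assoc]
      _ = ((ρ_ A).inv ≫ (A ◁ η A) ≫ (α_ A A A).inv ≫ (ε A ▷ A) ≫ (λ_ A).hom) ≫ f := by
          rw [MonoidalCategory.leftUnitor_naturality]; simp
      _ = f := by rw [snake₂ A]; simp
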